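/- For integers s, t ≥ 0, D ≥ 1 and 0 ≤ m < D, let I_{s,t,m} be the set of integer vectors (u_0,…,u_{D−1}) ∈ ℤ^D whose first m coordinates are zero, such that the sum of the positive coordinates is at most s and the sum of the absolute values of the negative coordinates is at most t. Then |I_{s,t,m}| = Σ_{i=0}^{D−m} C(D−m, i)·C(s, i)·C(D−m−i+t, t). -/

import Mathlib

open Finset

noncomputable def cntF {ι : Type*} [Fintype ι] [DecidableEq ι] (A : Finset ι) (M : ℕ) :
    Finset (ι → ℕ) :=
  (Fintype.piFinset fun _ => Finset.range (M + 1)).filter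
    fun f => (∀ j ∉ A, f j = 0) ∧ ∑ j, f j ≤ M

lemma mem_cntF {ι : Type*} [Fintype ι] [DecidableEq ι] {A : Finset ι} {M : ℕ} {f : ι → ℕ} :
    f ∈ cntF A M ↔ (∀ j ∉ A, f j = 0) ∧ ∑ j, f j ≤ M := by
  constructor
  · intro h; exact (Finset.mem_filter.1 h).2
  · intro h
    refine Finset.mem_filter.2 ⟨?_, h⟩
    refine Fintype.mem_piFinset.2 fun j => Finset.mem_range.2 ?_
    exact Nat.lt_succ_of_le (le_trans (Finset.single_le_sum (fun i _ => Nat.zero_le _) (mem_univ j)) h.2)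

lemma cntF_card {ι : Type*} [Fintype ι] [DecidableEq ι] (A : Finset ι) (M : ℕ) :
    (cntF A M).card = (M + A.card).choose A.card := by
  induction A using Finset.induction_on generalizing M with
  | empty =>
    simp only [Nat.choose_zero_right, card_empty, Nat.add_zero]
    rw [Finset.card_eq_one]
    refine ⟨fun _ => 0, ?_⟩
    ext f
    simp only [mem_cntF, Finset.mem_singleton]
    constructor
    · intro h; funext j; exact h.1 j (Finset.notMem_empty j)
    · rintro rfl; simp
  | @insert a A ha ih =>
    have key : ∀ v ∈ Finset.range (M + 1),
        ((cntF (insert a A) M).filter (fun f => f a = v)).card = (M - v + A.card).choose A.card := by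
      intro v hv
      have hv' : v ≤ M := Nat.lt_succ_iff.1 (Finset.mem_range.1 hv)
      rw [← ih (M - v)]
      apply Finset.card_nbij' (fun f => Function.update f a 0) (fun g => Function.update g a v)
      · -- forward maps in
        intro f hf
        obtain ⟨hf1, hfa⟩ := Finset.mem_filter.1 hf
        obtain ⟨hsupp, hsum⟩ := mem_cntF.1 hf1
        refine mem_cntF.2 ⟨?_, ?_⟩
        · intro j hj
          by_cases hja : j = a
          · subst hja; simp
          · dsimp only; rw [Function.update_of_ne hja]
            exact hsupp j (by simp [hja, hj])
        · have : ∑ j, Function.update f a 0 j = ∑ j, f j - f a := by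
            rw [Finset.sum_update_of_mem (mem_univ a), zero_add,
              Finset.sdiff_singleton_eq_erase, ← Finset.add_sum_erase _ f (mem_univ a)]
            omega
          rw [this, hfa]
          omega
      · -- backward maps in
        intro g hg
        obtain ⟨hsupp, hsum⟩ := mem_cntF.1 hg
        have hga : g a = 0 := hsupp a ha
        refine Finset.mem_filter.2 ⟨mem_cntF.2 ⟨?_, ?_⟩, by simp⟩
        · intro j hj
          have hja : j ≠ a := fun h => hj (h ▸ Finset.mem_insert_self a A)
          dsimp only; rw [Function.update_of_ne hja]
          exact hsupp j (fun h => hj (Finset.mem_insert_of_mem h))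
        · have : ∑ j, Function.update g a v j = v + ∑ j, g j := by
            rw [Finset.sum_update_of_mem (mem_univ a), Finset.sdiff_singleton_eq_erase,
              ← Finset.add_sum_erase _ g (mem_univ a), hga, zero_add]
          rw [this]; omega
      · intro f hf
        obtain ⟨_, hfa⟩ := Finset.mem_filter.1 hf
        dsimp only; rw [Function.update_idem, ← hfa, Function.update_eq_self]
      · intro g hg
        have hga : g a = 0 := (mem_cntF.1 hg).1 a ha
        dsimp only; rw [Function.update_idem, ← hga, Function.update_eq_self]
    rw [Finset.card_eq_sum_card_fiberwise (f := fun f => f a)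
      (t := Finset.range (M + 1)) (fun f hf => by
        obtain ⟨hsupp, hsum⟩ := mem_cntF.1 hf
        exact Finset.mem_range.2 (Nat.lt_succ_of_le (le_trans
          (Finset.single_le_sum (fun i _ => Nat.zero_le _) (mem_univ a)) hsum))),
      Finset.sum_congr rfl key]
    rw [Finset.card_insert_of_notMem ha]
    calc ∑ v ∈ Finset.range (M + 1), (M - v + A.card).choose A.card
        = ∑ v ∈ Finset.range (M + 1), (v + A.card).choose A.card := by
          rw [← Finset.sum_range_reflect]
          apply Finset.sum_congr rfl
          intro v hv
          congr 2
          have := Finset.mem_range.1 hv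
          omega
      _ = (M + A.card + 1).choose (A.card + 1) := Nat.sum_range_add_choose M A.card
      _ = (M + (A.card + 1)).choose (A.card + 1) := by rw [Nat.add_assoc]

noncomputable def cntPosF {ι : Type*} [Fintype ι] [DecidableEq ι] (A : Finset ι) (M : ℕ) :
    Finset (ι → ℕ) :=
  (Fintype.piFinset fun _ => Finset.range (M + 1)).filter
    fun f => (∀ j ∉ A, f j = 0) ∧ (∀ j ∈ A, 1 ≤ f j) ∧ ∑ j, f j ≤ M

lemma mem_cntPosF {ι : Type*} [Fintype ι] [DecidableEq ι] {A : Finset ι} {M : ℕ} {f : ι → ℕ} :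
    f ∈ cntPosF A M ↔ (∀ j ∉ A, f j = 0) ∧ (∀ j ∈ A, 1 ≤ f j) ∧ ∑ j, f j ≤ M := by
  constructor
  · intro h; exact (Finset.mem_filter.1 h).2
  · intro h
    refine Finset.mem_filter.2 ⟨?_, h⟩
    refine Fintype.mem_piFinset.2 fun j => Finset.mem_range.2 ?_
    exact Nat.lt_succ_of_le (le_trans (Finset.single_le_sum (fun i _ => Nat.zero_le _) (mem_univ j)) h.2.2)

lemma sum_indicator {ι : Type*} [Fintype ι] [DecidableEq ι] (A : Finset ι) :
    ∑ j, (if j ∈ A then 1 else 0) = A.card := by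
  rw [Finset.sum_ite_mem, Finset.univ_inter, Finset.card_eq_sum_ones]

lemma cntPosF_card {ι : Type*} [Fintype ι] [DecidableEq ι] (A : Finset ι) (M : ℕ) :
    (cntPosF A M).card = M.choose A.card := by
  rcases le_or_gt A.card M with hAM | hAM
  · have : (cntPosF A M).card = (cntF A (M - A.card)).card := by
      apply Finset.card_nbij' (fun f j => f j - (if j ∈ A then 1 else 0))
        (fun g j => g j + (if j ∈ A then 1 else 0))
      · intro f hf
        obtain ⟨hsupp, hpos, hsum⟩ := mem_cntPosF.1 hf
        refine mem_cntF.2 ⟨fun j hj => by simp [hj, hsupp j hj], ?_⟩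
        have hpt : ∀ j, (f j - (if j ∈ A then 1 else 0)) + (if j ∈ A then 1 else 0) = f j := by
          intro j
          by_cases hj : j ∈ A
          · have := hpos j hj; simp only [hj, if_true]; omega
          · simp [hj]
        have : (∑ j, (f j - (if j ∈ A then 1 else 0))) + A.card = ∑ j, f j := by
          rw [← sum_indicator A, ← Finset.sum_add_distrib]
          exact Finset.sum_congr rfl fun j _ => hpt j
        dsimp only; omega
      · intro g hg
        obtain ⟨hsupp, hsum⟩ := mem_cntF.1 hg
        refine mem_cntPosF.2 ⟨fun j hj => by simp [hj, hsupp j hj], fun j hj => by simp [hj], ?_⟩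
        rw [Finset.sum_add_distrib, sum_indicator A]
        omega
      · intro f hf
        obtain ⟨hsupp, hpos, hsum⟩ := mem_cntPosF.1 hf
        funext j
        by_cases hj : j ∈ A
        · have := hpos j hj; simp only [hj, if_true]; omega
        · simp [hj]
      · intro g hg
        funext j; simp
    rw [this, cntF_card, Nat.sub_add_cancel hAM]
  · rw [Nat.choose_eq_zero_of_lt hAM, Finset.card_eq_zero]
    rw [Finset.eq_empty_iff_forall_notMem]
    intro f hf
    obtain ⟨hsupp, hpos, hsum⟩ := mem_cntPosF.1 hf
    have h1 : A.card ≤ ∑ j ∈ A, f j := by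
      calc A.card = ∑ _j ∈ A, 1 := (Finset.card_eq_sum_ones A)
        _ ≤ ∑ j ∈ A, f j := Finset.sum_le_sum hpos
    have h2 : ∑ j ∈ A, f j ≤ ∑ j, f j :=
      Finset.sum_le_sum_of_subset (Finset.subset_univ A)
    omega

theorem stmt_11 (D m : ℕ) (s t : ℕ) (hm : m < D) :
    Set.ncard {u : Fin D → ℤ |
        (∀ j : Fin D, (j : ℕ) < m → u j = 0) ∧
        (∑ j, max (u j) 0) ≤ (s : ℤ) ∧
        (∑ j, max (-u j) 0) ≤ (t : ℤ)}
      = ∑ i ∈ Finset.range (D - m + 1),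
          (D - m).choose i * s.choose i * (D - m - i + t).choose t := by
  classical
  set M0 : Fin D := ⟨m, hm⟩ with hM0
  set H : Finset (Fin D) := Finset.Ici M0 with hH
  have hHcard : H.card = D - m := Fin.card_Ici M0
  have hmemH : ∀ j : Fin D, j ∈ H ↔ m ≤ (j : ℕ) := by
    intro j; rw [hH, Finset.mem_Ici]; exact Fin.le_def
  set F : Finset (Fin D → ℤ) :=
    (Fintype.piFinset fun _ : Fin D => Finset.Icc (-(t : ℤ)) (s : ℤ)).filter
      (fun u => (∀ j : Fin D, (j : ℕ) < m → u j = 0) ∧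
        (∑ j, max (u j) 0) ≤ (s : ℤ) ∧
        (∑ j, max (-u j) 0) ≤ (t : ℤ)) with hF
  have memF : ∀ u : Fin D → ℤ, u ∈ F ↔
      ((∀ j : Fin D, (j : ℕ) < m → u j = 0) ∧
        (∑ j, max (u j) 0) ≤ (s : ℤ) ∧
        (∑ j, max (-u j) 0) ≤ (t : ℤ)) := by
    intro u
    constructor
    · intro h; exact (Finset.mem_filter.1 h).2
    · intro h
      refine Finset.mem_filter.2 ⟨?_, h⟩
      refine Fintype.mem_piFinset.2 fun j => Finset.mem_Icc.2 ⟨?_, ?_⟩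
      · have h1 : -u j ≤ max (-u j) 0 := le_max_left _ _
        have h2 : max (-u j) 0 ≤ ∑ k, max (-u k) 0 :=
          Finset.single_le_sum (f := fun k => max (-u k) 0)
            (fun k _ => le_max_right _ _) (mem_univ j)
        linarith [h.2.2]
      · have h1 : u j ≤ max (u j) 0 := le_max_left _ _
        have h2 : max (u j) 0 ≤ ∑ k, max (u k) 0 :=
          Finset.single_le_sum (f := fun k => max (u k) 0)
            (fun k _ => le_max_right _ _) (mem_univ j)
        linarith [h.2.1]
  have hSF : {u : Fin D → ℤ |
        (∀ j : Fin D, (j : ℕ) < m → u j = 0) ∧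
        (∑ j, max (u j) 0) ≤ (s : ℤ) ∧
        (∑ j, max (-u j) 0) ≤ (t : ℤ)} = ↑F := by
    ext u; simp only [Set.mem_setOf_eq, Finset.coe_filter, memF u, Finset.mem_coe]
  rw [hSF, Set.ncard_coe_finset]
  have hfiber : ∀ u ∈ F, (Finset.univ.filter fun j => 0 < u j) ∈ H.powerset := by
    intro u hu
    obtain ⟨h0, -, -⟩ := (memF u).1 hu
    refine Finset.mem_powerset.2 fun j hj => (hmemH j).2 ?_
    by_contra hjm
    have h1 : u j = 0 := h0 j (by omega)
    have h2 := (Finset.mem_filter.1 hj).2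
    omega
  rw [Finset.card_eq_sum_card_fiberwise hfiber]
  have hfibcard : ∀ A ∈ H.powerset,
      (F.filter fun u => (Finset.univ.filter fun j => 0 < u j) = A).card
        = s.choose A.card * (t + (D - m - A.card)).choose (D - m - A.card) := by
    intro A hA
    have hAH : A ⊆ H := Finset.mem_powerset.1 hA
    have hBcard : (H \ A).card = D - m - A.card := by
      rw [Finset.card_sdiff_of_subset hAH, hHcard]
    rw [← hBcard, ← cntPosF_card A s, ← cntF_card (H \ A) t, ← Finset.card_product]
    apply Finset.card_nbij'
      (fun (u : Fin D → ℤ) => ((fun j => (u j).toNat, fun j => (-u j).toNat) :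
        (Fin D → ℕ) × (Fin D → ℕ)))
      (fun pq : (Fin D → ℕ) × (Fin D → ℕ) => (fun j => (pq.1 j : ℤ) - (pq.2 j : ℤ) : Fin D → ℤ))
    · -- forward mapsTo
      intro u hu
      obtain ⟨hu1, hupos⟩ := Finset.mem_filter.1 hu
      obtain ⟨h0, hs, ht⟩ := (memF u).1 hu1
      have hposA : ∀ j, (0 < u j) ↔ j ∈ A := by
        intro j
        constructor
        · intro h; rw [← hupos]; exact Finset.mem_filter.2 ⟨mem_univ j, h⟩
        · intro h; rw [← hupos] at h; exact (Finset.mem_filter.1 h).2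
      have hsum1 : ((∑ j, (u j).toNat : ℕ) : ℤ) = ∑ j, max (u j) 0 := by
        push_cast
        refine Finset.sum_congr rfl fun j _ => ?_
        omega
      have hsum2 : ((∑ j, (-u j).toNat : ℕ) : ℤ) = ∑ j, max (-u j) 0 := by
        push_cast
        refine Finset.sum_congr rfl fun j _ => ?_
        omega
      refine Finset.mem_product.2 ⟨mem_cntPosF.2 ⟨?_, ?_, ?_⟩, mem_cntF.2 ⟨?_, ?_⟩⟩
      · intro j hj
        have h1 : ¬ 0 < u j := fun h => hj ((hposA j).1 h)
        dsimp only
        omega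
      · intro j hj
        have := (hposA j).2 hj
        dsimp only
        omega
      · have : ((∑ j, (u j).toNat : ℕ) : ℤ) ≤ (s : ℤ) := by rw [hsum1]; exact hs
        dsimp only
        exact_mod_cast this
      · intro j hj
        rw [Finset.mem_sdiff] at hj
        push_neg at hj
        by_cases hjH : j ∈ H
        · have hjA := hj hjH
          have := (hposA j).2 hjA
          dsimp only
          omega
        · have hjm : (j : ℕ) < m := by
            by_contra hc
            exact hjH ((hmemH j).2 (by omega))
          have := h0 j hjm
          dsimp only
          omega
      · have : ((∑ j, (-u j).toNat : ℕ) : ℤ) ≤ (t : ℤ) := by rw [hsum2]; exact ht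
        dsimp only
        exact_mod_cast this
    · -- backward mapsTo
      intro pq hpq
      obtain ⟨hp, hq⟩ := Finset.mem_product.1 hpq
      obtain ⟨hpsupp, hppos, hpsum⟩ := mem_cntPosF.1 hp
      obtain ⟨hqsupp, hqsum⟩ := mem_cntF.1 hq
      set u : Fin D → ℤ := fun j => (pq.1 j : ℤ) - (pq.2 j : ℤ) with hu
      have hdisj : ∀ j, pq.1 j = 0 ∨ pq.2 j = 0 := by
        intro j
        by_cases hj : j ∈ A
        · right; exact hqsupp j (by simp [Finset.mem_sdiff, hj])
        · left; exact hpsupp j hj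
      have hmaxp : ∀ j, max (u j) 0 = (pq.1 j : ℤ) := by
        intro j
        rcases hdisj j with h | h <;> simp only [hu] <;> rw [h] <;> push_cast <;> omega
      have hmaxq : ∀ j, max (-u j) 0 = (pq.2 j : ℤ) := by
        intro j
        rcases hdisj j with h | h <;> simp only [hu] <;> rw [h] <;> push_cast <;> omega
      have hus : (∑ j, max (u j) 0) ≤ (s : ℤ) := by
        rw [Finset.sum_congr rfl fun j _ => hmaxp j]
        calc (∑ j, (pq.1 j : ℤ)) = ((∑ j, pq.1 j : ℕ) : ℤ) := by push_cast; ring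
          _ ≤ (s : ℤ) := by exact_mod_cast hpsum
      have hut : (∑ j, max (-u j) 0) ≤ (t : ℤ) := by
        rw [Finset.sum_congr rfl fun j _ => hmaxq j]
        calc (∑ j, (pq.2 j : ℤ)) = ((∑ j, pq.2 j : ℕ) : ℤ) := by push_cast; ring
          _ ≤ (t : ℤ) := by exact_mod_cast hqsum
      have hzero : ∀ j : Fin D, (j : ℕ) < m → u j = 0 := by
        intro j hj
        have hjH : j ∉ H := fun h => by have := (hmemH j).1 h; omega
        have h1 : pq.1 j = 0 := hpsupp j fun h => hjH (hAH h)
        have h2 : pq.2 j = 0 := hqsupp j (by simp [Finset.mem_sdiff, hjH])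
        simp [hu, h1, h2]
      refine Finset.mem_filter.2 ⟨(memF u).2 ⟨hzero, hus, hut⟩, ?_⟩
      ext j
      simp only [Finset.mem_filter, mem_univ, true_and]
      constructor
      · intro h
        by_contra hj
        have h1 : pq.1 j = 0 := hpsupp j hj
        simp only [hu, h1] at h
        omega
      · intro hj
        have h1 := hppos j hj
        have h2 : pq.2 j = 0 := hqsupp j (by simp [Finset.mem_sdiff, hj])
        simp only [hu, h2]
        omega
    · -- left inverse
      intro u hu
      funext j
      dsimp only
      omega
    · -- right inverse
      intro pq hpq
      obtain ⟨hp, hq⟩ := Finset.mem_product.1 hpq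
      obtain ⟨hpsupp, -, -⟩ := mem_cntPosF.1 hp
      obtain ⟨hqsupp, -⟩ := mem_cntF.1 hq
      have hdisj : ∀ j, pq.1 j = 0 ∨ pq.2 j = 0 := by
        intro j
        by_cases hj : j ∈ A
        · right; exact hqsupp j (by simp [Finset.mem_sdiff, hj])
        · left; exact hpsupp j hj
      ext j
      · dsimp only
        rcases hdisj j with h | h <;> omega
      · dsimp only
        rcases hdisj j with h | h <;> omega
  rw [Finset.sum_congr rfl hfibcard]
  -- group by cardinality
  rw [Finset.powerset_card_disjiUnion]; erw [Finset.sum_disjiUnion]; rw [hHcard]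
  apply Finset.sum_congr rfl
  intro i hi
  have : ∀ A ∈ H.powersetCard i,
      s.choose A.card * (t + (D - m - A.card)).choose (D - m - A.card)
        = s.choose i * (D - m - i + t).choose t := by
    intro A hA
    have hAc : A.card = i := (Finset.mem_powersetCard.1 hA).2
    rw [hAc, Nat.add_comm t (D - m - i), Nat.choose_symm_add]
  rw [Finset.sum_congr rfl this, Finset.sum_const, Finset.card_powersetCard, hHcard]
  ring
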